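/- The multivariable Krawtchouk polynomials K_ν(x; ρ, N) satisfy the self-duality K_ν(x; ρ, N) = K_{ν̃}(x̃; ρ̃, N), where x̃_j = ν_{d+1−j}, ν̃_j = x_{d+1−j}, and ρ̃_j = ρ_{d+1−j}(1−|ρ|) / [(1−|ρ_{d+1−j}^{(partial)}|)(1−|ρ_{d−j}^{(partial)}|)], with |ρ_k^{(partial)}| = ρ₁+⋯+ρ_k. Moreover, the map (x,ν,ρ) ↦ (x̃,ν̃,ρ̃) is an involution, and |ρ̃| = |ρ|. -/

import Mathlib

open Finset

/-- Pochhammer symbol `(a)_n = a(a+1)⋯(a+n-1)`. -/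
noncomputable def poch (a : ℝ) (n : ℕ) : ℝ := ∏ k ∈ Finset.range n, (a + k)

/-- Terminating Gauss hypergeometric sum `₂F₁(-n, b; c; z)`. -/
noncomputable def F21 (n : ℕ) (b c z : ℝ) : ℝ :=
  ∑ k ∈ Finset.range (n + 1),
    poch (-(n : ℝ)) k * poch b k / (poch c k * (Nat.factorial k : ℝ)) * z ^ k

/-- Terminating hypergeometric sum `₄F₃(-m, X, Y, Z; U, V, W; 1)`. -/
noncomputable def F43 (m : ℕ) (X Y Z U V W : ℝ) : ℝ :=
  ∑ k ∈ Finset.range (m + 1),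
    poch (-(m : ℝ)) k * poch X k * poch Y k * poch Z k /
      (poch U k * poch V k * poch W k * (Nat.factorial k : ℝ))

/-- Classical Jacobi polynomial `P_n^{(α,β)}`. -/
noncomputable def jacobiP (α β : ℝ) (n : ℕ) (x : ℝ) : ℝ :=
  poch (α + 1) n / (Nat.factorial n : ℝ) *
    ∑ k ∈ Finset.range (n + 1),
      poch (-(n : ℝ)) k * poch ((n : ℝ) + α + β + 1) k /
        (poch (α + 1) k * (Nat.factorial k : ℝ)) * ((1 - x) / 2) ^ k

/-- The multivariable Krawtchouk polynomial `K_ν(x; ρ, N)` (0-based indexing). -/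
noncomputable def krawtchouk (d N : ℕ) (ρ : Fin d → ℝ) (ν x : Fin d → ℕ) : ℝ :=
  (1 / poch (-(N : ℝ)) (∑ i, ν i)) *
    ∏ j : Fin d,
      (poch (-(N : ℝ) +
          (∑ i ∈ Finset.univ.filter (fun i : Fin d => (i : ℕ) < (j : ℕ)), (x i : ℝ)) +
          (∑ i ∈ Finset.univ.filter (fun i : Fin d => (j : ℕ) < (i : ℕ)), (ν i : ℝ))) (ν j) *
        F21 (ν j) (-(x j : ℝ))
          (-(N : ℝ) +
            (∑ i ∈ Finset.univ.filter (fun i : Fin d => (i : ℕ) < (j : ℕ)), (x i : ℝ)) +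
            (∑ i ∈ Finset.univ.filter (fun i : Fin d => (j : ℕ) < (i : ℕ)), (ν i : ℝ)))
          ((1 - ∑ i ∈ Finset.univ.filter (fun i : Fin d => (i : ℕ) < (j : ℕ)), ρ i) / ρ j))

/-- The dual Krawtchouk parameters
`ρ̃_j = ρ_{d+1-j}(1-|ρ|)/[(1-|ρ_{d+1-j}|)(1-|ρ_{d-j}|)]` (0-based indexing, via `Fin.rev`). -/
noncomputable def dualRho (d : ℕ) (ρ : Fin d → ℝ) : Fin d → ℝ :=
  fun j =>
    ρ (Fin.rev j) * (1 - ∑ i, ρ i) /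
      ((1 - ∑ i ∈ Finset.univ.filter (fun i : Fin d => (i : ℕ) ≤ ((Fin.rev j : Fin d) : ℕ)), ρ i) *
        (1 - ∑ i ∈ Finset.univ.filter (fun i : Fin d => (i : ℕ) < ((Fin.rev j : Fin d) : ℕ)), ρ i))

lemma poch_add (a : ℝ) (m n : ℕ) : poch a (m+n) = poch a m * poch (a + m) n := by
  unfold poch
  rw [Finset.prod_range_add]
  congr 1
  exact Finset.prod_congr rfl fun k _ => by push_cast; ring

lemma poch_neg_nat_eq_zero {n k : ℕ} (h : n < k) : poch (-(n:ℝ)) k = 0 := by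
  apply Finset.prod_eq_zero (Finset.mem_range.2 h)
  simp

lemma poch_neg_nat_ne_zero {N m : ℕ} (h : m ≤ N) : poch (-(N:ℝ)) m ≠ 0 := by
  rw [poch]
  apply Finset.prod_ne_zero_iff.2
  intro k hk
  have : (k:ℝ) < (N:ℝ) := by
    exact_mod_cast lt_of_lt_of_le (Finset.mem_range.1 hk) h
  intro h0; linarith


lemma F21_symm (n m : ℕ) (c z : ℝ) : F21 n (-(m:ℝ)) c z = F21 m (-(n:ℝ)) c z := by
  unfold F21
  rw [Finset.sum_subset (Finset.range_subset_range.2 (by omega : n+1 ≤ n+m+2))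
      (fun k _ hk => by
        have hnk : n < k := by simp only [Finset.mem_range] at hk ⊢; omega
        rw [poch_neg_nat_eq_zero hnk]; ring),
    Finset.sum_subset (Finset.range_subset_range.2 (by omega : m+1 ≤ n+m+2))
      (fun k _ hk => by
        have hnk : m < k := by simp only [Finset.mem_range] at hk; omega
        rw [poch_neg_nat_eq_zero hnk]; ring)]
  exact Finset.sum_congr rfl fun k _ => by ring

lemma keyG : ∀ (d : ℕ) (a : ℝ) (x ν : ℕ → ℕ),
    (∏ j ∈ Finset.range d,
        poch (a + (∑ i ∈ Finset.range j, (x i : ℝ)) + (∑ i ∈ Finset.Ico (j+1) d, (ν i : ℝ))) (ν j)) *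
      poch a (∑ i ∈ Finset.range d, x i)
    = (∏ j ∈ Finset.range d,
        poch (a + (∑ i ∈ Finset.range j, (x i : ℝ)) + (∑ i ∈ Finset.Ico (j+1) d, (ν i : ℝ))) (x j)) *
      poch a (∑ i ∈ Finset.range d, ν i) := by
  intro d
  induction d with
  | zero => intro a x ν; simp
  | succ d IH =>
    intro a x ν
    have hshift : ∀ (f : ℕ → ℕ) (j : ℕ), (∑ i ∈ Finset.Ico (j+2) (d+1), (f i : ℝ))
        = ∑ i ∈ Finset.Ico (j+1) d, (f (i+1) : ℝ) := by
      intro f j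
      rw [Finset.sum_Ico_eq_sum_range, Finset.sum_Ico_eq_sum_range,
        show d + 1 - (j+2) = d - (j+1) from by omega]
      exact Finset.sum_congr rfl fun i _ => by norm_num; congr 1; omega
    have hsum0 : ∀ (f : ℕ → ℕ) (j : ℕ), (∑ i ∈ Finset.range (j+1), (f i : ℝ))
        = (f 0 : ℝ) + ∑ i ∈ Finset.range j, (f (i+1) : ℝ) := by
      intro f j
      rw [Finset.sum_range_succ']; ring
    rw [Finset.prod_range_succ', Finset.prod_range_succ', Finset.sum_range_succ',
      Finset.sum_range_succ' (fun i => ν i) d]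
    have hIH := IH (a + (x 0 : ℝ)) (fun i => x (i+1)) (fun i => ν (i+1))
    have hc : ∀ j, (a + (∑ i ∈ Finset.range (j+1), (x i : ℝ)) + (∑ i ∈ Finset.Ico (j+1+1) (d+1), (ν i : ℝ)))
        = (a + (x 0:ℝ)) + (∑ i ∈ Finset.range j, ((x (i+1)) : ℝ)) + (∑ i ∈ Finset.Ico (j+1) d, ((ν (i+1)) : ℝ)) := by
      intro j
      rw [hshift, hsum0]; ring
    simp only [hc]
    simp only [Finset.range_zero, Finset.sum_empty, add_zero]
    -- c_0 term : a + 0 + ∑ i ∈ Ico 1 (d+1) ν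
    have hm : (∑ i ∈ Finset.Ico (0+1) (d+1), (ν i : ℝ)) = ((∑ i ∈ Finset.range d, ν (i+1) : ℕ) : ℝ) := by
      push_cast
      rw [Finset.sum_Ico_eq_sum_range]
      simp only [Nat.add_sub_cancel]
      exact Finset.sum_congr rfl fun i _ => by norm_num; congr 1; omega
    rw [hm]
    set A := ∏ j ∈ Finset.range d, poch (a + (x 0:ℝ) + (∑ i ∈ Finset.range j, ((x (i+1)) : ℝ)) + (∑ i ∈ Finset.Ico (j+1) d, ((ν (i+1)) : ℝ))) (ν (j+1)) with hA
    set B := ∏ j ∈ Finset.range d, poch (a + (x 0:ℝ) + (∑ i ∈ Finset.range j, ((x (i+1)) : ℝ)) + (∑ i ∈ Finset.Ico (j+1) d, ((ν (i+1)) : ℝ))) (x (j+1)) with hB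
    set X' := ∑ i ∈ Finset.range d, x (i+1) with hX'
    set m := ∑ i ∈ Finset.range d, ν (i+1) with hm'
    -- goal: A * poch (a + m) (ν 0) * poch a (X' + x 0) = B * poch (a + m) (x 0) * poch a (m + ν 0)
    have e1 : poch a (X' + x 0) = poch a (x 0) * poch (a + (x 0:ℝ)) X' := by
      rw [add_comm X' (x 0), poch_add]
    have e2 : poch a (m + ν 0) = poch a m * poch (a + (m:ℝ)) (ν 0) := by
      rw [poch_add]
    have hswap : poch a (x 0) * poch (a + (x 0:ℝ)) m = poch (a + (m:ℝ)) (x 0) * poch a m := by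
      rw [← poch_add a (x 0) m, add_comm (x 0) m, poch_add, mul_comm]
    rw [e1, e2]
    -- hIH : A * poch (a + x0) X' = B * poch (a + x0) m
    linear_combination (poch (a + (m:ℝ)) (ν 0) * poch a (x 0)) * hIH +
      (poch (a + (m:ℝ)) (ν 0) * B) * hswap

lemma filter_lt_sum {d : ℕ} (k : ℕ) (hk : k ≤ d) (f : Fin d → ℝ) (F : ℕ → ℝ)
    (hf : ∀ i : Fin d, f i = F (i:ℕ)) :
    ∑ i ∈ Finset.univ.filter (fun i : Fin d => (i : ℕ) < k), f i = ∑ i ∈ Finset.range k, F i := by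
  rw [Finset.sum_filter]
  rw [Finset.sum_congr rfl (fun (i : Fin d) _ => show (if (i:ℕ) < k then f i else 0)
      = (fun n => if n < k then F n else 0) (i : ℕ) from by simp only [hf i])]
  rw [Fin.sum_univ_eq_sum_range (fun n => if n < k then F n else 0) d]
  rw [← Finset.sum_filter]
  congr 1
  ext i
  simp only [Finset.mem_filter, Finset.mem_range]
  omega

lemma filter_gt_sum {d : ℕ} (k : ℕ) (f : Fin d → ℝ) (F : ℕ → ℝ)
    (hf : ∀ i : Fin d, f i = F (i:ℕ)) :
    ∑ i ∈ Finset.univ.filter (fun i : Fin d => k < (i : ℕ)), f i = ∑ i ∈ Finset.Ico (k+1) d, F i := by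
  rw [Finset.sum_filter]
  rw [Finset.sum_congr rfl (fun (i : Fin d) _ => show (if k < (i:ℕ) then f i else 0)
      = (fun n => if k < n then F n else 0) (i : ℕ) from by simp only [hf i])]
  rw [Fin.sum_univ_eq_sum_range (fun n => if k < n then F n else 0) d]
  rw [← Finset.sum_filter]
  congr 1
  ext i
  simp only [Finset.mem_filter, Finset.mem_range, Finset.mem_Ico]
  omega

lemma keyG_fin (d N : ℕ) (x ν : Fin d → ℕ) :
    (∏ j : Fin d,
        poch (-(N:ℝ) + (∑ i ∈ Finset.univ.filter (fun i : Fin d => (i : ℕ) < (j : ℕ)), (x i : ℝ))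
          + (∑ i ∈ Finset.univ.filter (fun i : Fin d => (j : ℕ) < (i : ℕ)), (ν i : ℝ))) (ν j)) *
      poch (-(N:ℝ)) (∑ i, x i)
    = (∏ j : Fin d,
        poch (-(N:ℝ) + (∑ i ∈ Finset.univ.filter (fun i : Fin d => (i : ℕ) < (j : ℕ)), (x i : ℝ))
          + (∑ i ∈ Finset.univ.filter (fun i : Fin d => (j : ℕ) < (i : ℕ)), (ν i : ℝ))) (x j)) *
      poch (-(N:ℝ)) (∑ i, ν i) := by
  classical
  set X : ℕ → ℕ := fun i => if h : i < d then x ⟨i, h⟩ else 0 with hX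
  set V : ℕ → ℕ := fun i => if h : i < d then ν ⟨i, h⟩ else 0 with hV
  have hx : ∀ i : Fin d, x i = X (i : ℕ) := fun i => by simp [hX, i.isLt]
  have hv : ∀ i : Fin d, ν i = V (i : ℕ) := fun i => by simp [hV, i.isLt]
  have hsx : (∑ i, x i) = ∑ i ∈ Finset.range d, X i := by
    rw [Finset.sum_congr rfl (fun i _ => hx i), Fin.sum_univ_eq_sum_range]
  have hsv : (∑ i, ν i) = ∑ i ∈ Finset.range d, V i := by
    rw [Finset.sum_congr rfl (fun i _ => hv i), Fin.sum_univ_eq_sum_range]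
  have hterm : ∀ (w : Fin d → ℕ) (W : ℕ → ℕ), (∀ i : Fin d, w i = W (i:ℕ)) →
      ∀ j : Fin d, poch (-(N:ℝ) + (∑ i ∈ Finset.univ.filter (fun i : Fin d => (i : ℕ) < (j : ℕ)), (x i : ℝ))
          + (∑ i ∈ Finset.univ.filter (fun i : Fin d => (j : ℕ) < (i : ℕ)), (ν i : ℝ))) (w j)
      = (fun n => poch (-(N:ℝ) + (∑ i ∈ Finset.range n, (X i : ℝ))
          + (∑ i ∈ Finset.Ico (n+1) d, (V i : ℝ))) (W n)) (j : ℕ) := by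
    intro w W hw j
    simp only
    rw [filter_lt_sum (j:ℕ) j.isLt.le (fun i => (x i : ℝ)) (fun n => (X n : ℝ))
        (fun i => by simp only [hx i]),
      filter_gt_sum (j:ℕ) (fun i => (ν i : ℝ)) (fun n => (V n : ℝ)) (fun i => by simp only [hv i]),
      hw j]
  rw [Finset.prod_congr rfl (fun j _ => hterm ν V hv j),
    Fin.prod_univ_eq_prod_range (fun n => poch (-(N:ℝ) + (∑ i ∈ Finset.range n, (X i : ℝ))
          + (∑ i ∈ Finset.Ico (n+1) d, (V i : ℝ))) (V n)) d,
    Finset.prod_congr rfl (fun j _ => hterm x X hx j),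
    Fin.prod_univ_eq_prod_range (fun n => poch (-(N:ℝ) + (∑ i ∈ Finset.range n, (X i : ℝ))
          + (∑ i ∈ Finset.Ico (n+1) d, (V i : ℝ))) (X n)) d, hsx, hsv]
  exact keyG d (-(N:ℝ)) X V

lemma partial_lt_one {d : ℕ} (ρ : Fin d → ℝ) (h0 : ∀ i, 0 < ρ i) (hs : ∑ i, ρ i < 1) (k : ℕ) :
    ∑ i ∈ Finset.univ.filter (fun i : Fin d => (i : ℕ) < k), ρ i < 1 :=
  lt_of_le_of_lt (Finset.sum_le_sum_of_subset_of_nonneg (Finset.filter_subset _ _)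
    (fun i _ _ => (h0 i).le)) hs

lemma filter_le_eq {d : ℕ} (k : ℕ) :
    Finset.univ.filter (fun i : Fin d => (i : ℕ) ≤ k) = Finset.univ.filter (fun i : Fin d => (i : ℕ) < k + 1) := by
  ext i; simp [Nat.lt_succ_iff]

lemma filter_lt_insert {d k : ℕ} (hk : k < d) :
    Finset.univ.filter (fun i : Fin d => (i : ℕ) < k + 1)
      = insert (⟨k, hk⟩ : Fin d) (Finset.univ.filter (fun i : Fin d => (i : ℕ) < k)) := by
  ext i
  simp only [Finset.mem_filter, Finset.mem_univ, true_and, Finset.mem_insert, Fin.ext_iff]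
  omega

lemma dualRho_partial {d : ℕ} (ρ : Fin d → ℝ) (h0 : ∀ i, 0 < ρ i) (hs : ∑ i, ρ i < 1) :
    ∀ k, k ≤ d → ∑ i ∈ Finset.univ.filter (fun i : Fin d => (i : ℕ) < k), dualRho d ρ i
      = 1 - (1 - ∑ i, ρ i) / (1 - ∑ i ∈ Finset.univ.filter (fun i : Fin d => (i : ℕ) < d - k), ρ i) := by
  have hne : ∀ m : ℕ, (1 - ∑ i ∈ Finset.univ.filter (fun i : Fin d => (i : ℕ) < m), ρ i) ≠ 0 :=
    fun m => ne_of_gt (by linarith [partial_lt_one ρ h0 hs m])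
  intro k
  induction k with
  | zero =>
    intro _
    rw [show Finset.univ.filter (fun i : Fin d => (i : ℕ) < 0) = (∅ : Finset (Fin d)) from by
      ext i; simp]
    rw [show Finset.univ.filter (fun i : Fin d => (i : ℕ) < d - 0) = (Finset.univ : Finset (Fin d)) from by
      ext i; simp [i.isLt]]
    rw [Finset.sum_empty, div_self (by linarith)]
    ring
  | succ k IH =>
    intro hk1
    have hk : k < d := by omega
    rw [filter_lt_insert hk, Finset.sum_insert (by simp), IH (by omega)]
    have hrev : Fin.rev (⟨k, hk⟩ : Fin d) = ⟨d - k - 1, by omega⟩ := by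
      ext; simp [Fin.val_rev]; omega
    have hd1 : dualRho d ρ ⟨k, hk⟩ = ρ ⟨d - k - 1, by omega⟩ * (1 - ∑ i, ρ i) /
        ((1 - ∑ i ∈ Finset.univ.filter (fun i : Fin d => (i : ℕ) < d - k), ρ i) *
          (1 - ∑ i ∈ Finset.univ.filter (fun i : Fin d => (i : ℕ) < d - k - 1), ρ i)) := by
      unfold dualRho
      simp only [hrev]
      rw [show Finset.univ.filter (fun i : Fin d => (i : ℕ) ≤ d - k - 1)
            = Finset.univ.filter (fun i : Fin d => (i : ℕ) < d - k) from by
          ext i; simp only [Finset.mem_filter, Finset.mem_univ, true_and]; omega]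
    have hsplit : ∑ i ∈ Finset.univ.filter (fun i : Fin d => (i : ℕ) < d - k), ρ i
        = ρ ⟨d - k - 1, by omega⟩ + ∑ i ∈ Finset.univ.filter (fun i : Fin d => (i : ℕ) < d - k - 1), ρ i := by
      rw [show Finset.univ.filter (fun i : Fin d => (i : ℕ) < d - k)
            = insert (⟨d - k - 1, by omega⟩ : Fin d) (Finset.univ.filter (fun i : Fin d => (i : ℕ) < d - k - 1)) from by
          ext i
          simp only [Finset.mem_filter, Finset.mem_univ, true_and, Finset.mem_insert, Fin.ext_iff]
          omega,
        Finset.sum_insert (by simp)]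
    rw [hd1, show Finset.univ.filter (fun i : Fin d => (i : ℕ) < d - (k + 1))
          = Finset.univ.filter (fun i : Fin d => (i : ℕ) < d - k - 1) from by
        ext i; simp only [Finset.mem_filter, Finset.mem_univ, true_and]; omega]
    set S := ∑ i, ρ i
    set A := ∑ i ∈ Finset.univ.filter (fun i : Fin d => (i : ℕ) < d - k), ρ i
    set B := ∑ i ∈ Finset.univ.filter (fun i : Fin d => (i : ℕ) < d - k - 1), ρ i
    have hA : (1 - A) ≠ 0 := hne _
    have hB : (1 - B) ≠ 0 := hne _
    field_simp
    rw [hsplit]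
    ring

lemma dualRho_sum {d : ℕ} (ρ : Fin d → ℝ) (h0 : ∀ i, 0 < ρ i) (hs : ∑ i, ρ i < 1) :
    ∑ i, dualRho d ρ i = ∑ i, ρ i := by
  have h := dualRho_partial ρ h0 hs d le_rfl
  rw [show Finset.univ.filter (fun i : Fin d => (i : ℕ) < d) = Finset.univ from by
      ext i; simp [i.isLt],
    show Finset.univ.filter (fun i : Fin d => (i : ℕ) < d - d) = (∅ : Finset (Fin d)) from by
      ext i; simp,
    Finset.sum_empty] at h
  rw [h]; ring

lemma dualRho_z {d : ℕ} (ρ : Fin d → ℝ) (h0 : ∀ i, 0 < ρ i) (hs : ∑ i, ρ i < 1) (j : Fin d) :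
    (1 - ∑ i ∈ Finset.univ.filter (fun i : Fin d => (i : ℕ) < ((Fin.rev j : Fin d) : ℕ)), dualRho d ρ i)
      / dualRho d ρ (Fin.rev j)
    = (1 - ∑ i ∈ Finset.univ.filter (fun i : Fin d => (i : ℕ) < (j : ℕ)), ρ i) / ρ j := by
  have hne : ∀ m : ℕ, (1 - ∑ i ∈ Finset.univ.filter (fun i : Fin d => (i : ℕ) < m), ρ i) ≠ 0 :=
    fun m => ne_of_gt (by linarith [partial_lt_one ρ h0 hs m])
  have hj := j.isLt
  have h1 := dualRho_partial ρ h0 hs ((Fin.rev j : Fin d) : ℕ) (by omega)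
  rw [show Finset.univ.filter (fun i : Fin d => (i : ℕ) < d - ((Fin.rev j : Fin d) : ℕ))
        = Finset.univ.filter (fun i : Fin d => (i : ℕ) < (j : ℕ) + 1) from by
      ext i; simp only [Finset.mem_filter, Finset.mem_univ, true_and, Fin.val_rev]; omega] at h1
  rw [h1]
  have h2 : dualRho d ρ (Fin.rev j) = ρ j * (1 - ∑ i, ρ i) /
      ((1 - ∑ i ∈ Finset.univ.filter (fun i : Fin d => (i : ℕ) < (j : ℕ) + 1), ρ i) *
        (1 - ∑ i ∈ Finset.univ.filter (fun i : Fin d => (i : ℕ) < (j : ℕ)), ρ i)) := by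
    unfold dualRho
    simp only [Fin.rev_rev]
    rw [show Finset.univ.filter (fun i : Fin d => (i : ℕ) ≤ (j : ℕ))
          = Finset.univ.filter (fun i : Fin d => (i : ℕ) < (j : ℕ) + 1) from by
        ext i; simp only [Finset.mem_filter, Finset.mem_univ, true_and]; omega]
  rw [h2]
  have hS : (1 - ∑ i, ρ i) ≠ 0 := by linarith
  have hQ := hne ((j : ℕ) + 1)
  have hP := hne (j : ℕ)
  have hrj := ne_of_gt (h0 j)
  field_simp
  ring

lemma dualRho_invol {d : ℕ} (ρ : Fin d → ℝ) (h0 : ∀ i, 0 < ρ i) (hs : ∑ i, ρ i < 1) :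
    dualRho d (dualRho d ρ) = ρ := by
  have hne : ∀ m : ℕ, (1 - ∑ i ∈ Finset.univ.filter (fun i : Fin d => (i : ℕ) < m), ρ i) ≠ 0 :=
    fun m => ne_of_gt (by linarith [partial_lt_one ρ h0 hs m])
  funext j
  have hj := j.isLt
  have expand : ∀ (τ : Fin d → ℝ) (j : Fin d), dualRho d τ j = τ (Fin.rev j) * (1 - ∑ i, τ i) /
      ((1 - ∑ i ∈ Finset.univ.filter (fun i : Fin d => (i : ℕ) ≤ ((Fin.rev j : Fin d) : ℕ)), τ i) *
        (1 - ∑ i ∈ Finset.univ.filter (fun i : Fin d => (i : ℕ) < ((Fin.rev j : Fin d) : ℕ)), τ i)) :=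
    fun τ j => rfl
  rw [expand (dualRho d ρ) j, dualRho_sum ρ h0 hs]
  -- the ≤ sum
  rw [filter_le_eq ((Fin.rev j : Fin d) : ℕ)]
  have h1 := dualRho_partial ρ h0 hs (((Fin.rev j : Fin d) : ℕ) + 1) (by omega)
  rw [show Finset.univ.filter (fun i : Fin d => (i : ℕ) < d - (((Fin.rev j : Fin d) : ℕ) + 1))
        = Finset.univ.filter (fun i : Fin d => (i : ℕ) < (j : ℕ)) from by
      ext i; simp only [Finset.mem_filter, Finset.mem_univ, true_and, Fin.val_rev]; omega] at h1
  rw [h1]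
  have h2 := dualRho_partial ρ h0 hs ((Fin.rev j : Fin d) : ℕ) (by omega)
  rw [show Finset.univ.filter (fun i : Fin d => (i : ℕ) < d - ((Fin.rev j : Fin d) : ℕ))
        = Finset.univ.filter (fun i : Fin d => (i : ℕ) < (j : ℕ) + 1) from by
      ext i; simp only [Finset.mem_filter, Finset.mem_univ, true_and, Fin.val_rev]; omega] at h2
  rw [h2]
  have h3 : dualRho d ρ (Fin.rev j) = ρ j * (1 - ∑ i, ρ i) /
      ((1 - ∑ i ∈ Finset.univ.filter (fun i : Fin d => (i : ℕ) < (j : ℕ) + 1), ρ i) *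
        (1 - ∑ i ∈ Finset.univ.filter (fun i : Fin d => (i : ℕ) < (j : ℕ)), ρ i)) := by
    unfold dualRho
    simp only [Fin.rev_rev]
    rw [show Finset.univ.filter (fun i : Fin d => (i : ℕ) ≤ (j : ℕ))
          = Finset.univ.filter (fun i : Fin d => (i : ℕ) < (j : ℕ) + 1) from by
        ext i; simp only [Finset.mem_filter, Finset.mem_univ, true_and]; omega]
  have alg : ∀ p S P Q : ℝ, (1 - S) ≠ 0 → (1 - P) ≠ 0 → (1 - Q) ≠ 0 →
      p * (1 - S) / ((1 - Q) * (1 - P)) * (1 - S) /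
        ((1 - (1 - (1 - S) / (1 - P))) * (1 - (1 - (1 - S) / (1 - Q)))) = p := by
    intro p S P Q hS hP hQ
    rw [sub_sub_cancel, sub_sub_cancel]
    field_simp
  rw [h3]
  exact alg (ρ j) (∑ i, ρ i) (∑ i ∈ Finset.univ.filter (fun i : Fin d => (i : ℕ) < (j : ℕ)), ρ i)
    (∑ i ∈ Finset.univ.filter (fun i : Fin d => (i : ℕ) < (j : ℕ) + 1), ρ i)
    (by linarith) (hne _) (hne _)

lemma sum_rev_lt {d : ℕ} (f : Fin d → ℝ) (j : Fin d) :
    ∑ i ∈ Finset.univ.filter (fun i : Fin d => (i : ℕ) < ((Fin.rev j : Fin d) : ℕ)), f i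
      = ∑ i ∈ Finset.univ.filter (fun i : Fin d => (j : ℕ) < (i : ℕ)), f (Fin.rev i) := by
  rw [Finset.sum_filter, Finset.sum_filter,
    ← Equiv.sum_comp Fin.revPerm
      (fun i : Fin d => if (i : ℕ) < ((Fin.rev j : Fin d) : ℕ) then f i else 0)]
  refine Finset.sum_congr rfl fun i _ => ?_
  simp only [Fin.revPerm_apply]
  have hi := i.isLt; have hj := j.isLt
  by_cases h : (j : ℕ) < (i : ℕ)
  · rw [if_pos (by simp only [Fin.val_rev]; omega), if_pos h]
  · rw [if_neg (by simp only [Fin.val_rev]; omega), if_neg h]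

lemma sum_rev_gt {d : ℕ} (f : Fin d → ℝ) (j : Fin d) :
    ∑ i ∈ Finset.univ.filter (fun i : Fin d => ((Fin.rev j : Fin d) : ℕ) < (i : ℕ)), f i
      = ∑ i ∈ Finset.univ.filter (fun i : Fin d => (i : ℕ) < (j : ℕ)), f (Fin.rev i) := by
  rw [Finset.sum_filter, Finset.sum_filter,
    ← Equiv.sum_comp Fin.revPerm
      (fun i : Fin d => if ((Fin.rev j : Fin d) : ℕ) < (i : ℕ) then f i else 0)]
  refine Finset.sum_congr rfl fun i _ => ?_
  simp only [Fin.revPerm_apply]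
  have hi := i.isLt; have hj := j.isLt
  by_cases h : (i : ℕ) < (j : ℕ)
  · rw [if_pos (by simp only [Fin.val_rev]; omega), if_pos h]
  · rw [if_neg (by simp only [Fin.val_rev]; omega), if_neg h]


lemma main_id (d N : ℕ) (x ν : Fin d → ℕ) (hx : ∑ i, x i ≤ N) (hν : ∑ i, ν i ≤ N)
    (z : Fin d → ℝ) :
    (1 / poch (-(N : ℝ)) (∑ i, ν i)) *
      ∏ j : Fin d,
        (poch (-(N : ℝ) +
            (∑ i ∈ Finset.univ.filter (fun i : Fin d => (i : ℕ) < (j : ℕ)), (x i : ℝ)) +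
            (∑ i ∈ Finset.univ.filter (fun i : Fin d => (j : ℕ) < (i : ℕ)), (ν i : ℝ))) (ν j) *
          F21 (ν j) (-(x j : ℝ))
            (-(N : ℝ) +
              (∑ i ∈ Finset.univ.filter (fun i : Fin d => (i : ℕ) < (j : ℕ)), (x i : ℝ)) +
              (∑ i ∈ Finset.univ.filter (fun i : Fin d => (j : ℕ) < (i : ℕ)), (ν i : ℝ)))
            (z j))
    = (1 / poch (-(N : ℝ)) (∑ i, x i)) *
      ∏ j : Fin d,
        (poch (-(N : ℝ) +
            (∑ i ∈ Finset.univ.filter (fun i : Fin d => (i : ℕ) < (j : ℕ)), (x i : ℝ)) +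
            (∑ i ∈ Finset.univ.filter (fun i : Fin d => (j : ℕ) < (i : ℕ)), (ν i : ℝ))) (x j) *
          F21 (x j) (-(ν j : ℝ))
            (-(N : ℝ) +
              (∑ i ∈ Finset.univ.filter (fun i : Fin d => (i : ℕ) < (j : ℕ)), (x i : ℝ)) +
              (∑ i ∈ Finset.univ.filter (fun i : Fin d => (j : ℕ) < (i : ℕ)), (ν i : ℝ)))
            (z j)) := by
  have hsym : (∏ j : Fin d,
        (poch (-(N : ℝ) +
            (∑ i ∈ Finset.univ.filter (fun i : Fin d => (i : ℕ) < (j : ℕ)), (x i : ℝ)) +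
            (∑ i ∈ Finset.univ.filter (fun i : Fin d => (j : ℕ) < (i : ℕ)), (ν i : ℝ))) (x j) *
          F21 (x j) (-(ν j : ℝ))
            (-(N : ℝ) +
              (∑ i ∈ Finset.univ.filter (fun i : Fin d => (i : ℕ) < (j : ℕ)), (x i : ℝ)) +
              (∑ i ∈ Finset.univ.filter (fun i : Fin d => (j : ℕ) < (i : ℕ)), (ν i : ℝ)))
            (z j)))
      = ∏ j : Fin d,
        (poch (-(N : ℝ) +
            (∑ i ∈ Finset.univ.filter (fun i : Fin d => (i : ℕ) < (j : ℕ)), (x i : ℝ)) +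
            (∑ i ∈ Finset.univ.filter (fun i : Fin d => (j : ℕ) < (i : ℕ)), (ν i : ℝ))) (x j) *
          F21 (ν j) (-(x j : ℝ))
            (-(N : ℝ) +
              (∑ i ∈ Finset.univ.filter (fun i : Fin d => (i : ℕ) < (j : ℕ)), (x i : ℝ)) +
              (∑ i ∈ Finset.univ.filter (fun i : Fin d => (j : ℕ) < (i : ℕ)), (ν i : ℝ)))
            (z j)) :=
    Finset.prod_congr rfl (fun j _ => by rw [F21_symm])
  rw [hsym, Finset.prod_mul_distrib, Finset.prod_mul_distrib]
  have hkey := keyG_fin d N x ν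
  have hA := poch_neg_nat_ne_zero hν
  have hB := poch_neg_nat_ne_zero hx
  set F := ∏ j : Fin d, F21 (ν j) (-(x j : ℝ))
      (-(N : ℝ) +
        (∑ i ∈ Finset.univ.filter (fun i : Fin d => (i : ℕ) < (j : ℕ)), (x i : ℝ)) +
        (∑ i ∈ Finset.univ.filter (fun i : Fin d => (j : ℕ) < (i : ℕ)), (ν i : ℝ))) (z j) with hF
  field_simp
  linear_combination F * hkey


/-- Self-duality of the multivariable Krawtchouk polynomials:
`K_ν(x; ρ, N) = K_{ν̃}(x̃; ρ̃, N)` with `x̃_j = ν_{d+1-j}`, `ν̃_j = x_{d+1-j}`;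
moreover the map `(x,ν,ρ) ↦ (x̃,ν̃,ρ̃)` is an involution, and `|ρ̃| = |ρ|`. -/
theorem stmt_14 (d N : ℕ) (ρ : Fin d → ℝ)
    (hρ : ∀ i, 0 < ρ i ∧ ρ i < 1) (hρs : ∑ i, ρ i < 1)
    (x ν : Fin d → ℕ) (hx : ∑ i, x i ≤ N) (hν : ∑ i, ν i ≤ N) :
    krawtchouk d N ρ ν x =
      krawtchouk d N (dualRho d ρ) (fun j => x (Fin.rev j)) (fun j => ν (Fin.rev j)) ∧
    dualRho d (dualRho d ρ) = ρ ∧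
    (fun j => (fun i => ν (Fin.rev i)) (Fin.rev j)) = ν ∧
    (fun j => (fun i => x (Fin.rev i)) (Fin.rev j)) = x ∧
    ∑ j, dualRho d ρ j = ∑ j, ρ j := by
  have h0 : ∀ i, 0 < ρ i := fun i => (hρ i).1
  refine ⟨?_, dualRho_invol ρ h0 hρs, ?_, ?_, dualRho_sum ρ h0 hρs⟩
  · have hdual : krawtchouk d N (dualRho d ρ) (fun j => x (Fin.rev j)) (fun j => ν (Fin.rev j))
        = (1 / poch (-(N : ℝ)) (∑ i, x i)) *
          ∏ j : Fin d,
            (poch (-(N : ℝ) +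
                (∑ i ∈ Finset.univ.filter (fun i : Fin d => (i : ℕ) < (j : ℕ)), (x i : ℝ)) +
                (∑ i ∈ Finset.univ.filter (fun i : Fin d => (j : ℕ) < (i : ℕ)), (ν i : ℝ))) (x j) *
              F21 (x j) (-(ν j : ℝ))
                (-(N : ℝ) +
                  (∑ i ∈ Finset.univ.filter (fun i : Fin d => (i : ℕ) < (j : ℕ)), (x i : ℝ)) +
                  (∑ i ∈ Finset.univ.filter (fun i : Fin d => (j : ℕ) < (i : ℕ)), (ν i : ℝ)))
                ((1 - ∑ i ∈ Finset.univ.filter (fun i : Fin d => (i : ℕ) < (j : ℕ)), ρ i) / ρ j)) := by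
      simp only [krawtchouk]
      congr 1
      · congr 2
        exact Fintype.sum_equiv Fin.revPerm _ _ (fun i => rfl)
      · refine ((Equiv.prod_comp Fin.revPerm _).symm).trans
          (Finset.prod_congr rfl fun j _ => ?_)
        simp only [Fin.revPerm_apply, Fin.rev_rev]
        rw [sum_rev_lt (fun i => (ν (Fin.rev i) : ℝ)) j, sum_rev_gt (fun i => (x (Fin.rev i) : ℝ)) j]
        simp only [Fin.rev_rev]
        rw [dualRho_z ρ h0 hρs j, add_right_comm]
    rw [hdual]
    simp only [krawtchouk]
    exact main_id d N x ν hx hν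
      (fun j => (1 - ∑ i ∈ Finset.univ.filter (fun i : Fin d => (i : ℕ) < (j : ℕ)), ρ i) / ρ j)
  · funext j; simp [Fin.rev_rev]
  · funext j; simp [Fin.rev_rev]
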